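/- arXiv:2501.18026 — 3 statements merged into one kernel-verified Lean document; each statement's English description precedes it below -/
import Mathlib

section
/- For any finite signed Borel measure μ on a metric space S and any bounded Lipschitz function f on S, the measure f·μ (with density f with respect to μ) satisfies ‖f·μ‖_FM* ≤ 2‖f‖_FM ‖μ‖_FM*, where ‖μ‖_FM* := sup{∫ g dμ : g bounded Lipschitz, ‖g‖_∞ ≤ 1, |g|_L ≤ 1}. -/
open MeasureTheory Filter Topology
open scoped NNReal ENNReal

/-- Integration of a function against a finite signed measure, via the Jordan decomposition. -/
noncomputable def sintegral {S : Type*} [MeasurableSpace S] (μ : SignedMeasure S) (f : S → ℝ) : ℝ :=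
  (∫ x, f x ∂μ.toJordanDecomposition.posPart) - ∫ x, f x ∂μ.toJordanDecomposition.negPart

/-- Total variation norm of a finite signed measure: `‖μ‖_TV = μ⁺(S) + μ⁻(S)`. -/
noncomputable def tvNorm {S : Type*} [MeasurableSpace S] (μ : SignedMeasure S) : ℝ :=
  (μ.toJordanDecomposition.posPart Set.univ + μ.toJordanDecomposition.negPart Set.univ).toReal

/-- Fortet–Mourier norm: `‖μ‖_FM* = sup {∫ f dμ : f ∈ BL(S), ‖f‖_∞ ≤ 1, |f|_L ≤ 1}`. -/
noncomputable def fmNorm {S : Type*} [MeasurableSpace S] [MetricSpace S]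
    (μ : SignedMeasure S) : ℝ :=
  sSup {r | ∃ f : S → ℝ, (∀ x, |f x| ≤ 1) ∧ LipschitzWith 1 f ∧ r = sintegral μ f}

/-- The signed measure `g·μ` with density `g` with respect to the signed measure `μ`,
i.e. `E ↦ ∫_E g dμ`, defined via the Jordan decomposition of `μ`. -/
noncomputable def densitySM {S : Type*} [MeasurableSpace S]
    (μ : SignedMeasure S) (g : S → ℝ) : SignedMeasure S :=
  μ.toJordanDecomposition.posPart.withDensityᵥ g - μ.toJordanDecomposition.negPart.withDensityᵥ g

section Aux

variable {S : Type*} [MeasurableSpace S]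

lemma integrable_of_bdd {ν : Measure S} [IsFiniteMeasure ν] {g : S → ℝ} {C : ℝ}
    (hm : AEStronglyMeasurable g ν) (hb : ∀ x, |g x| ≤ C) : Integrable g ν :=
  ⟨hm, HasFiniteIntegral.of_bounded (C := C)
    (ae_of_all _ (fun x => by simpa [Real.norm_eq_abs] using hb x))⟩

lemma isFiniteMeasure_wd {ν : Measure S} [IsFiniteMeasure ν] {h : S → ℝ≥0} {C : ℝ}
    (hb : ∀ x, (h x : ℝ) ≤ C) :
    IsFiniteMeasure (ν.withDensity fun x => (h x : ℝ≥0∞)) := by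
  apply isFiniteMeasure_withDensity
  have : ∫⁻ x, (h x : ℝ≥0∞) ∂ν ≤ ∫⁻ _, ENNReal.ofReal C ∂ν := by
    refine lintegral_mono fun x => ?_
    rw [← ENNReal.ofReal_coe_nnreal]
    exact ENNReal.ofReal_le_ofReal (hb x)
  refine ne_of_lt (lt_of_le_of_lt this ?_)
  rw [lintegral_const]
  exact ENNReal.mul_lt_top ENNReal.ofReal_lt_top (measure_lt_top _ _)

/-- Key computation: `∫ g d(f·μ) = ∫ f g dμ` for bounded measurable `f, g`. -/
lemma sintegral_densitySM (μ : SignedMeasure S) {f g : S → ℝ} {Bf Bg : ℝ}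
    (hfm : Measurable f) (hfb : ∀ x, |f x| ≤ Bf)
    (hgm : Measurable g) (hgb : ∀ x, |g x| ≤ Bg) :
    sintegral (densitySM μ f) g = sintegral μ fun x => f x * g x := by
  set P := μ.toJordanDecomposition.posPart with hP
  set N := μ.toJordanDecomposition.negPart with hN
  set ν := densitySM μ f with hν
  set fp : S → ℝ≥0 := fun x => (f x).toNNReal with hfp
  set fq : S → ℝ≥0 := fun x => (-f x).toNNReal with hfq
  have hfpm : Measurable fp := hfm.real_toNNReal
  have hfqm : Measurable fq := hfm.neg.real_toNNReal
  have hfpb : ∀ x, (fp x : ℝ) ≤ |Bf| := fun x => by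
    simp only [hfp, Real.coe_toNNReal']
    have h1 : f x ≤ |Bf| := le_trans (le_trans (le_abs_self _) (hfb x)) (le_abs_self _)
    exact max_le h1 (abs_nonneg Bf)
  have hfqb : ∀ x, (fq x : ℝ) ≤ |Bf| := fun x => by
    simp only [hfq, Real.coe_toNNReal']
    have h1 : -f x ≤ |Bf| := le_trans (le_trans (neg_le_abs _) (hfb x)) (le_abs_self _)
    exact max_le h1 (abs_nonneg Bf)
  have hfpq : ∀ x, (fp x : ℝ) - (fq x : ℝ) = f x := fun x => by
    simp only [hfp, hfq, Real.coe_toNNReal']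
    rcases le_total 0 (f x) with h | h
    · rw [max_eq_left h, max_eq_right (by linarith)]; ring
    · rw [max_eq_right h, max_eq_left (by linarith)]; ring
  haveI : IsFiniteMeasure (P.withDensity fun x => (fp x : ℝ≥0∞)) := isFiniteMeasure_wd hfpb
  haveI : IsFiniteMeasure (P.withDensity fun x => (fq x : ℝ≥0∞)) := isFiniteMeasure_wd hfqb
  haveI : IsFiniteMeasure (N.withDensity fun x => (fp x : ℝ≥0∞)) := isFiniteMeasure_wd hfpb
  haveI : IsFiniteMeasure (N.withDensity fun x => (fq x : ℝ≥0∞)) := isFiniteMeasure_wd hfqb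
  set A : Measure S :=
    P.withDensity (fun x => (fp x : ℝ≥0∞)) + N.withDensity (fun x => (fq x : ℝ≥0∞)) with hA
  set Bm : Measure S :=
    P.withDensity (fun x => (fq x : ℝ≥0∞)) + N.withDensity (fun x => (fp x : ℝ≥0∞)) with hBm
  have hfiP : Integrable f P := integrable_of_bdd hfm.aestronglyMeasurable hfb
  have hfiN : Integrable f N := integrable_of_bdd hfm.aestronglyMeasurable hfb
  -- value of ν on measurable sets
  have hνval : ∀ s : Set S, MeasurableSet s →
      ν s = (A s).toReal - (Bm s).toReal := by
    intro s hs
    have h1 : ν s = (∫ x in s, f x ∂P) - ∫ x in s, f x ∂N := by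
      rw [hν, densitySM, VectorMeasure.sub_apply, withDensityᵥ_apply hfiP hs,
        withDensityᵥ_apply hfiN hs]
    have hInt : ∀ (m : Measure S) [IsFiniteMeasure m],
        ∫ x in s, f x ∂m = ((m.withDensity fun x => (fp x : ℝ≥0∞)) s).toReal
          - ((m.withDensity fun x => (fq x : ℝ≥0∞)) s).toReal := by
      intro m _
      have hfim : Integrable f m := integrable_of_bdd hfm.aestronglyMeasurable hfb
      rw [integral_eq_lintegral_pos_part_sub_lintegral_neg_part hfim.integrableOn,
        withDensity_apply _ hs, withDensity_apply _ hs]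
      rfl
    rw [h1, hInt P, hInt N, hA, hBm]
    simp only [Measure.add_apply]
    rw [ENNReal.toReal_add (measure_ne_top _ _) (measure_ne_top _ _),
      ENNReal.toReal_add (measure_ne_top _ _) (measure_ne_top _ _)]
    ring
  -- value of ν via its Jordan decomposition
  have hνJ : ∀ s : Set S, MeasurableSet s →
      ν s = (ν.toJordanDecomposition.posPart s).toReal
        - (ν.toJordanDecomposition.negPart s).toReal := by
    intro s hs
    conv_lhs => rw [← ν.toSignedMeasure_toJordanDecomposition]
    rw [JordanDecomposition.toSignedMeasure, Measure.toSignedMeasure_sub_apply hs]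
    rfl
  -- measure equality from Jordan decomposition uniqueness at the level of values
  have hmeas : ν.toJordanDecomposition.posPart + Bm = ν.toJordanDecomposition.negPart + A := by
    ext s hs
    have h1 := hνval s hs
    have h2 := hνJ s hs
    simp only [Measure.add_apply]
    rw [← ENNReal.toReal_eq_toReal_iff' (by finiteness) (by finiteness),
      ENNReal.toReal_add (measure_ne_top _ _) (measure_ne_top _ _),
      ENNReal.toReal_add (measure_ne_top _ _) (measure_ne_top _ _)]
    have := h1.symm.trans h2
    linarith
  have hgi : ∀ (m : Measure S) [IsFiniteMeasure m], Integrable g m := fun m _ =>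
    integrable_of_bdd hgm.aestronglyMeasurable hgb
  -- integrate g against the measure identity
  have hint : (∫ x, g x ∂ν.toJordanDecomposition.posPart) + ∫ x, g x ∂Bm
      = (∫ x, g x ∂ν.toJordanDecomposition.negPart) + ∫ x, g x ∂A := by
    rw [← integral_add_measure (hgi _) (hgi _), ← integral_add_measure (hgi _) (hgi _), hmeas]
  have hwd : ∀ (m : Measure S) [IsFiniteMeasure m], ∀ h : S → ℝ≥0, Measurable h →
      ∫ x, g x ∂(m.withDensity fun x => (h x : ℝ≥0∞)) = ∫ x, (h x : ℝ) * g x ∂m := by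
    intro m _ h hh
    rw [integral_withDensity_eq_integral_smul hh]
    rfl
  have hPfg : Integrable (fun x => f x * g x) P :=
    integrable_of_bdd (hfm.mul hgm).aestronglyMeasurable (C := |Bf| * |Bg|) fun x => by
      rw [abs_mul]
      exact mul_le_mul (le_trans (hfb x) (le_abs_self _)) (le_trans (hgb x) (le_abs_self _))
        (abs_nonneg _) (abs_nonneg _)
  have hNfg : Integrable (fun x => f x * g x) N :=
    integrable_of_bdd (hfm.mul hgm).aestronglyMeasurable (C := |Bf| * |Bg|) fun x => by
      rw [abs_mul]
      exact mul_le_mul (le_trans (hfb x) (le_abs_self _)) (le_trans (hgb x) (le_abs_self _))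
        (abs_nonneg _) (abs_nonneg _)
  have hip : ∀ (m : Measure S) [IsFiniteMeasure m], Integrable (fun x => (fp x : ℝ) * g x) m :=
    fun m _ => integrable_of_bdd ((hfpm.coe_nnreal_real).mul hgm).aestronglyMeasurable
      (C := |Bf| * |Bg|) fun x => by
        rw [abs_mul]
        refine mul_le_mul ?_ (le_trans (hgb x) (le_abs_self _)) (abs_nonneg _) (abs_nonneg _)
        rw [abs_of_nonneg (fp x).coe_nonneg]; exact hfpb x
  have hiq : ∀ (m : Measure S) [IsFiniteMeasure m], Integrable (fun x => (fq x : ℝ) * g x) m :=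
    fun m _ => integrable_of_bdd ((hfqm.coe_nnreal_real).mul hgm).aestronglyMeasurable
      (C := |Bf| * |Bg|) fun x => by
        rw [abs_mul]
        refine mul_le_mul ?_ (le_trans (hgb x) (le_abs_self _)) (abs_nonneg _) (abs_nonneg _)
        rw [abs_of_nonneg (fq x).coe_nonneg]; exact hfqb x
  have hdiff : ∀ (m : Measure S) [IsFiniteMeasure m],
      (∫ x, (fp x : ℝ) * g x ∂m) - ∫ x, (fq x : ℝ) * g x ∂m = ∫ x, f x * g x ∂m := by
    intro m _
    rw [← integral_sub (hip m) (hiq m)]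
    refine integral_congr_ae (ae_of_all _ fun x => ?_)
    simp only [← sub_mul, hfpq x]
  have hAint : ∫ x, g x ∂A = (∫ x, (fp x : ℝ) * g x ∂P) + ∫ x, (fq x : ℝ) * g x ∂N := by
    rw [hA, integral_add_measure (hgi _) (hgi _), hwd P fp hfpm, hwd N fq hfqm]
  have hBint : ∫ x, g x ∂Bm = (∫ x, (fq x : ℝ) * g x ∂P) + ∫ x, (fp x : ℝ) * g x ∂N := by
    rw [hBm, integral_add_measure (hgi _) (hgi _), hwd P fq hfqm, hwd N fp hfpm]
  have key : sintegral ν g = (∫ x, g x ∂A) - ∫ x, g x ∂Bm := by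
    rw [sintegral]; linarith
  rw [key, hAint, hBint, sintegral, ← hdiff P, ← hdiff N]
  ring

end Aux

/-- For a finite signed Borel measure `μ` and a bounded Lipschitz `f` (with
`‖f‖_∞ ≤ B`, `|f|_L ≤ K`), the measure `f·μ` satisfies `‖f·μ‖_FM* ≤ 2 max(B,K) ‖μ‖_FM*`. -/
theorem densitySM_fmNorm_le {S : Type*} [MeasurableSpace S] [MetricSpace S] [BorelSpace S]
    (μ : SignedMeasure S) (f : S → ℝ) (B K : NNReal)
    (hfb : ∀ x, |f x| ≤ (B : ℝ)) (hfl : LipschitzWith K f) :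
    fmNorm (densitySM μ f) ≤ 2 * max (B : ℝ) (K : ℝ) * fmNorm μ := by
  have hfm : Measurable f := hfl.continuous.measurable
  set c : ℝ := 2 * max (B : ℝ) (K : ℝ) with hc
  have hmax0 : (0 : ℝ) ≤ max (B : ℝ) (K : ℝ) := le_trans B.coe_nonneg (le_max_left _ _)
  have hc0 : 0 ≤ c := by positivity
  have hBc : (B : ℝ) ≤ c := by
    have : (B : ℝ) ≤ max (B : ℝ) (K : ℝ) := le_max_left _ _
    linarith
  have hKc : (B : ℝ) + (K : ℝ) ≤ c := by
    have h1 : (B : ℝ) ≤ max (B : ℝ) (K : ℝ) := le_max_left _ _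
    have h2 : (K : ℝ) ≤ max (B : ℝ) (K : ℝ) := le_max_right _ _
    linarith
  -- the defining set for fmNorm μ is nonempty and bounded above
  have hbdd : BddAbove {r | ∃ g : S → ℝ, (∀ x, |g x| ≤ 1) ∧ LipschitzWith 1 g ∧
      r = sintegral μ g} := by
    refine ⟨(μ.toJordanDecomposition.posPart Set.univ).toReal
      + (μ.toJordanDecomposition.negPart Set.univ).toReal, ?_⟩
    rintro r ⟨g, hg1, hgl, rfl⟩
    rw [sintegral]
    have h1 : ‖∫ x, g x ∂μ.toJordanDecomposition.posPart‖
        ≤ 1 * (μ.toJordanDecomposition.posPart Set.univ).toReal :=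
      norm_integral_le_of_norm_le_const (ae_of_all _ fun x => by
        simpa [Real.norm_eq_abs] using hg1 x)
    have h2 : ‖∫ x, g x ∂μ.toJordanDecomposition.negPart‖
        ≤ 1 * (μ.toJordanDecomposition.negPart Set.univ).toReal :=
      norm_integral_le_of_norm_le_const (ae_of_all _ fun x => by
        simpa [Real.norm_eq_abs] using hg1 x)
    rw [Real.norm_eq_abs] at h1 h2
    rw [one_mul] at h1 h2
    have := abs_le.mp h1
    have := abs_le.mp h2
    linarith [(abs_le.mp h1).1, (abs_le.mp h1).2, (abs_le.mp h2).1, (abs_le.mp h2).2]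
  have h0mem : (0 : ℝ) ∈ {r | ∃ g : S → ℝ, (∀ x, |g x| ≤ 1) ∧ LipschitzWith 1 g ∧
      r = sintegral μ g} :=
    ⟨fun _ => 0, fun x => by simp, (LipschitzWith.const 0).weaken zero_le_one,
      by simp [sintegral]⟩
  have hfm0 : 0 ≤ fmNorm μ := le_csSup hbdd h0mem
  rw [fmNorm]
  refine Real.sSup_le ?_ (by positivity)
  rintro r ⟨g, hg1, hgl, rfl⟩
  rw [sintegral_densitySM μ hfm hfb hgl.continuous.measurable hg1]
  by_cases hcz : c = 0
  · have hB0 : (B : ℝ) = 0 := le_antisymm (by linarith) B.coe_nonneg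
    have hf0 : ∀ x, f x = 0 := fun x =>
      abs_eq_zero.mp (le_antisymm (hB0 ▸ hfb x) (abs_nonneg _))
    have : (fun x => f x * g x) = fun _ => (0 : ℝ) := funext fun x => by rw [hf0 x, zero_mul]
    rw [this]
    simp only [sintegral, integral_zero, sub_zero]
    positivity
  · have hcpos : 0 < c := lt_of_le_of_ne hc0 (Ne.symm hcz)
    set h : S → ℝ := fun x => (f x * g x) / c with hh
    have hfg : ∀ x y, |f x * g x - f y * g y| ≤ c * dist x y := by
      intro x y
      have key : f x * g x - f y * g y = f x * (g x - g y) + g y * (f x - f y) := by ring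
      rw [key]
      calc |f x * (g x - g y) + g y * (f x - f y)|
          ≤ |f x * (g x - g y)| + |g y * (f x - f y)| := abs_add_le _ _
        _ = |f x| * |g x - g y| + |g y| * |f x - f y| := by rw [abs_mul, abs_mul]
        _ ≤ (B : ℝ) * (1 * dist x y) + 1 * ((K : ℝ) * dist x y) := by
            refine add_le_add (mul_le_mul (hfb x) ?_ (abs_nonneg _) B.coe_nonneg)
              (mul_le_mul (hg1 y) ?_ (abs_nonneg _) zero_le_one)
            · have := hgl.dist_le_mul x y
              simpa [Real.dist_eq, NNReal.coe_one] using this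
            · have := hfl.dist_le_mul x y
              simpa [Real.dist_eq] using this
        _ = ((B : ℝ) + (K : ℝ)) * dist x y := by ring
        _ ≤ c * dist x y := mul_le_mul_of_nonneg_right hKc dist_nonneg
    have hh1 : ∀ x, |h x| ≤ 1 := by
      intro x
      rw [hh]
      simp only [abs_div, abs_of_pos hcpos]
      rw [div_le_one hcpos, abs_mul]
      calc |f x| * |g x| ≤ (B : ℝ) * 1 :=
            mul_le_mul (hfb x) (hg1 x) (abs_nonneg _) B.coe_nonneg
        _ ≤ c := by rw [mul_one]; exact hBc
    have hhl : LipschitzWith 1 h := by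
      refine LipschitzWith.of_dist_le_mul fun x y => ?_
      rw [Real.dist_eq, hh]
      have : (f x * g x) / c - (f y * g y) / c = (f x * g x - f y * g y) / c := by ring
      rw [this, abs_div, abs_of_pos hcpos, div_le_iff₀ hcpos, NNReal.coe_one, one_mul]
      calc |f x * g x - f y * g y| ≤ c * dist x y := hfg x y
        _ = dist x y * c := by ring
    have heq : sintegral μ (fun x => f x * g x) = c * sintegral μ h := by
      have hch : ∀ x, f x * g x = c * h x := fun x => by
        rw [hh]; field_simp
      simp only [sintegral]
      rw [show (fun x => f x * g x) = fun x => c * h x from funext hch]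
      rw [integral_const_mul, integral_const_mul]
      ring
    rw [heq]
    exact mul_le_mul_of_nonneg_left (le_csSup hbdd ⟨h, hh1, hhl, rfl⟩) hc0
end

section
/- Let ν be a finite positive measure on a measurable space (S, Σ) and 1 < p < ∞. A ν-integrable function f belongs to L^p(S, ν) if and only if there exists a constant C > 0 such that for every finite measurable partition A_1, …, A_m of S with ν(A_k) > 0 for all k, one has Σ_{k=1}^m ν(A_k)^{1−p} |∫_{A_k} f dν|^p ≤ C. Moreover, the smallest such constant C equals ‖f‖_p^p. -/
open MeasureTheory Filter Topology
open scoped ENNReal NNReal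

lemma cell_holder {S : Type*} [MeasurableSpace S] {ν : Measure S} [IsFiniteMeasure ν]
    {p : ℝ} (hp : 1 < p) {f : S → ℝ} (hfp : MemLp f (ENNReal.ofReal p) ν)
    {A : Set S} (hA : MeasurableSet A) :
    (ν A).toReal ^ (1 - p) * |∫ x in A, f x ∂ν| ^ p ≤ ∫ x in A, |f x| ^ p ∂ν := by
  have hp0 : (0:ℝ) < p := lt_trans zero_lt_one hp
  set q : ℝ := Real.conjExponent p with hqdef
  have hpq : p.HolderConjugate q := Real.HolderConjugate.conjExponent hp
  have h1 : MemLp (fun _ : S => (1:ℝ)) (ENNReal.ofReal q) (ν.restrict A) := memLp_const 1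
  have H := integral_mul_norm_le_Lp_mul_Lq (μ := ν.restrict A) hpq (hfp.restrict A) h1
  simp only [norm_one, mul_one, Real.one_rpow] at H
  have hint1 : ∫ _ : S, (1:ℝ) ∂ν.restrict A = (ν A).toReal := by
    simp [Measure.restrict_apply_univ, measureReal_def]
  rw [hint1] at H
  set t : ℝ := (ν A).toReal with ht
  have ht0 : 0 ≤ t := ENNReal.toReal_nonneg
  set I : ℝ := ∫ x in A, |f x| ^ p ∂ν with hI
  have hI0 : 0 ≤ I := integral_nonneg fun x => Real.rpow_nonneg (abs_nonneg _) _
  have Habs : |∫ x in A, f x ∂ν| ≤ I ^ (1/p) * t ^ (1/q) := by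
    calc |∫ x in A, f x ∂ν| ≤ ∫ x in A, ‖f x‖ ∂ν := by
          simpa [Real.norm_eq_abs] using norm_integral_le_integral_norm (μ := ν.restrict A) f
      _ ≤ (∫ a in A, ‖f a‖ ^ p ∂ν) ^ (1/p) * t ^ (1/q) := H
      _ = I ^ (1/p) * t ^ (1/q) := by simp [hI, Real.norm_eq_abs]
  have hq_inv : 1/q * p = p - 1 := by
    have h := hpq.inv_add_inv_eq_one
    have hqne : q ≠ 0 := hpq.symm.pos.ne'
    field_simp at h ⊢
    nlinarith [h]
  have hLHS : |∫ x in A, f x ∂ν| ^ p ≤ I * t ^ (p - 1) := by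
    calc |∫ x in A, f x ∂ν| ^ p
        ≤ (I ^ (1/p) * t ^ (1/q)) ^ p :=
          Real.rpow_le_rpow (abs_nonneg _) Habs hp0.le
      _ = (I ^ (1/p)) ^ p * (t ^ (1/q)) ^ p :=
          Real.mul_rpow (Real.rpow_nonneg hI0 _) (Real.rpow_nonneg ht0 _)
      _ = I * t ^ (p - 1) := by
          rw [← Real.rpow_mul hI0, ← Real.rpow_mul ht0, one_div_mul_cancel hp0.ne',
            Real.rpow_one, hq_inv]
  rcases eq_or_lt_of_le ht0 with h0 | htpos
  · rw [← h0, Real.zero_rpow (by linarith : (1:ℝ) - p ≠ 0), zero_mul]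
    exact hI0
  · calc t ^ (1 - p) * |∫ x in A, f x ∂ν| ^ p
        ≤ t ^ (1 - p) * (I * t ^ (p - 1)) :=
          mul_le_mul_of_nonneg_left hLHS (Real.rpow_nonneg ht0 _)
      _ = I * (t ^ (1 - p) * t ^ (p - 1)) := by ring
      _ = I := by
          rw [← Real.rpow_add htpos]
          norm_num

lemma toReal_eLpNorm_pow {S : Type*} [MeasurableSpace S] {ν : Measure S}
    {p : ℝ} (hp : 1 < p) {f : S → ℝ} (hfp : MemLp f (ENNReal.ofReal p) ν) :
    (eLpNorm f (ENNReal.ofReal p) ν).toReal ^ p = ∫ x, |f x| ^ p ∂ν := by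
  have hp0 : (0:ℝ) < p := lt_trans zero_lt_one hp
  have hP0 : (ENNReal.ofReal p) ≠ 0 := by
    simp [ENNReal.ofReal_eq_zero, not_le, hp0]
  have hPt : (ENNReal.ofReal p) ≠ ∞ := ENNReal.ofReal_ne_top
  have hPr : (ENNReal.ofReal p).toReal = p := ENNReal.toReal_ofReal hp0.le
  have h := hfp.eLpNorm_eq_integral_rpow_norm hP0 hPt
  rw [h, hPr]
  have hInn : (0:ℝ) ≤ ∫ a, ‖f a‖ ^ p ∂ν :=
    integral_nonneg fun x => Real.rpow_nonneg (norm_nonneg _) _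
  rw [ENNReal.toReal_ofReal (Real.rpow_nonneg hInn _), ← Real.rpow_mul hInn,
    inv_mul_cancel₀ hp0.ne', Real.rpow_one]
  simp [Real.norm_eq_abs]

lemma sum_le_integral {S : Type*} [MeasurableSpace S] {ν : Measure S} [IsFiniteMeasure ν]
    {p : ℝ} (hp : 1 < p) {f : S → ℝ} (hfp : MemLp f (ENNReal.ofReal p) ν)
    (m : ℕ) (A : Fin m → Set S) (hmeas : ∀ k, MeasurableSet (A k))
    (hdisj : Pairwise (Function.onFun Disjoint A)) (hcov : (⋃ k, A k) = Set.univ) :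
    ∑ k, (ν (A k)).toReal ^ (1 - p) * |∫ x in A k, f x ∂ν| ^ p
      ≤ (eLpNorm f (ENNReal.ofReal p) ν).toReal ^ p := by
  have hp0 : (0:ℝ) < p := lt_trans zero_lt_one hp
  have hint : Integrable (fun x => |f x| ^ p) ν := by
    have := hfp.integrable_norm_rpow (by simp [ENNReal.ofReal_eq_zero, not_le, hp0])
      ENNReal.ofReal_ne_top
    simpa [Real.norm_eq_abs, ENNReal.toReal_ofReal hp0.le] using this
  calc ∑ k, (ν (A k)).toReal ^ (1 - p) * |∫ x in A k, f x ∂ν| ^ p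
      ≤ ∑ k, ∫ x in A k, |f x| ^ p ∂ν :=
        Finset.sum_le_sum fun k _ => cell_holder hp hfp (hmeas k)
    _ = ∫ x in ⋃ k, A k, |f x| ^ p ∂ν :=
        (integral_iUnion_fintype hmeas hdisj fun k => hint.integrableOn).symm
    _ = ∫ x, |f x| ^ p ∂ν := by rw [hcov, Measure.restrict_univ]
    _ = (eLpNorm f (ENNReal.ofReal p) ν).toReal ^ p := (toReal_eLpNorm_pow hp hfp).symm

lemma drop_pos {S : Type*} [MeasurableSpace S] {ν : Measure S} [IsFiniteMeasure ν]
    {p : ℝ} (hp : 1 < p) (f : S → ℝ) {C : ℝ} (hC0 : 0 ≤ C)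
    (H : ∀ (m : ℕ) (A : Fin m → Set S), (∀ k, MeasurableSet (A k)) →
      Pairwise (Function.onFun Disjoint A) → (⋃ k, A k) = Set.univ →
      (∀ k, 0 < ν (A k)) →
      ∑ k, (ν (A k)).toReal ^ (1 - p) * |∫ x in A k, f x ∂ν| ^ p ≤ C)
    (m : ℕ) (A : Fin m → Set S) (hmeas : ∀ k, MeasurableSet (A k))
    (hdisj : Pairwise (Function.onFun Disjoint A)) (hcov : (⋃ k, A k) = Set.univ) :
    ∑ k, (ν (A k)).toReal ^ (1 - p) * |∫ x in A k, f x ∂ν| ^ p ≤ C := by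
  classical
  have hps : (1:ℝ) - p ≠ 0 := by linarith
  set term : Set S → ℝ := fun B => (ν B).toReal ^ (1 - p) * |∫ x in B, f x ∂ν| ^ p with hterm
  set T : Finset (Fin m) := Finset.univ.filter (fun k => 0 < ν (A k)) with hT
  have hmemT : ∀ k : Fin m, k ∈ T ↔ 0 < ν (A k) := by
    intro k; simp [hT]
  have hnull : ∀ k : Fin m, k ∉ T → ν (A k) = 0 := by
    intro k hk
    rw [hmemT] at hk
    exact le_antisymm (not_lt.mp hk) zero_le
  have hzero : ∀ k ∉ T, term (A k) = 0 := by
    intro k hk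
    simp [hterm, hnull k hk, Real.zero_rpow hps]
  have hsumT : ∑ k ∈ T, term (A k) = ∑ k, term (A k) :=
    Finset.sum_subset T.subset_univ (fun k _ hk => hzero k hk)
  show ∑ k, term (A k) ≤ C
  rw [← hsumT]
  rcases T.eq_empty_or_nonempty with hTe | ⟨k0, hk0⟩
  · simp [hTe, hC0]
  · set N : Set S := ⋃ (k : Fin m) (_ : k ∉ T), A k with hN
    have hNmeas : MeasurableSet N :=
      MeasurableSet.iUnion fun k => MeasurableSet.iUnion fun _ => hmeas k
    have hNnull : ν N = 0 :=
      measure_iUnion_null fun k => measure_iUnion_null fun hk => hnull k hk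
    have hNdisj : ∀ c : Fin m, c ∈ T → Disjoint N (A c) := by
      intro c hc
      refine Set.disjoint_iUnion_left.2 fun k => Set.disjoint_iUnion_left.2 fun hk => ?_
      refine hdisj (fun h : k = c => hk ?_)
      rw [h]; exact hc
    set e : Fin T.card ≃ {x // x ∈ T} := T.equivFin.symm with he
    set A' : Fin T.card → Set S :=
      fun i => if ((e i : Fin m) = k0) then A k0 ∪ N else A (e i) with hA'
    have hA'eq : ∀ t : {x // x ∈ T},
        (if ((t : Fin m) = k0) then A k0 ∪ N else A (t : Fin m)) =
        A (t : Fin m) ∪ (if ((t : Fin m) = k0) then N else ∅) := by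
      intro t
      by_cases h : ((t : Fin m) = k0) <;> simp [h]
    have hA'eq' : ∀ i, A' i = A (e i) ∪ (if ((e i : Fin m) = k0) then N else ∅) := by
      intro i; rw [hA']; exact hA'eq (e i)
    have hA'meas : ∀ i, MeasurableSet (A' i) := by
      intro i
      rw [hA'eq']
      refine (hmeas _).union ?_
      split
      · exact hNmeas
      · exact MeasurableSet.empty
    have hA'disj : Pairwise (Function.onFun Disjoint A') := by
      intro i j hij
      have hcoe : (e i : Fin m) ≠ (e j : Fin m) := by
        intro h
        exact hij (e.injective (Subtype.ext h))
      show Disjoint (A' i) (A' j)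
      rw [hA'eq' i, hA'eq' j]
      have d1 : Disjoint (A (e i)) (A (e j)) := hdisj hcoe
      have d2 : Disjoint (A (e i)) (if ((e j : Fin m) = k0) then N else ∅) := by
        split
        · exact (hNdisj _ (e i).2).symm
        · exact Set.disjoint_empty _
      have d3 : Disjoint (if ((e i : Fin m) = k0) then N else ∅) (A (e j)) := by
        split
        · exact hNdisj _ (e j).2
        · exact Set.empty_disjoint _
      have d4 : Disjoint (if ((e i : Fin m) = k0) then N else ∅)
          (if ((e j : Fin m) = k0) then N else ∅) := by
        by_cases h1 : ((e i : Fin m) = k0)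
        · have h2 : ¬ ((e j : Fin m) = k0) := fun h => hcoe (h1.trans h.symm)
          simp [h1, h2]
        · simp [h1]
      exact Set.disjoint_union_left.2
        ⟨Set.disjoint_union_right.2 ⟨d1, d2⟩, Set.disjoint_union_right.2 ⟨d3, d4⟩⟩
    have hA'cov : (⋃ i, A' i) = Set.univ := by
      apply Set.eq_univ_of_forall
      intro x
      have hx : x ∈ ⋃ k, A k := hcov ▸ Set.mem_univ x
      obtain ⟨k, hk⟩ := Set.mem_iUnion.mp hx
      by_cases hkT : k ∈ T
      · refine Set.mem_iUnion.mpr ⟨e.symm ⟨k, hkT⟩, ?_⟩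
        rw [hA'eq', Equiv.apply_symm_apply]
        exact Or.inl hk
      · refine Set.mem_iUnion.mpr ⟨e.symm ⟨k0, hk0⟩, ?_⟩
        rw [hA'eq', Equiv.apply_symm_apply]
        refine Or.inr ?_
        have : (⟨k0, hk0⟩ : {x // x ∈ T}) = ⟨k0, hk0⟩ := rfl
        simp only [if_pos rfl]
        exact Set.mem_iUnion.mpr ⟨k, Set.mem_iUnion.mpr ⟨hkT, hk⟩⟩
    have hA'pos : ∀ i, 0 < ν (A' i) := by
      intro i
      rw [hA'eq']
      refine lt_of_lt_of_le ?_ (measure_mono Set.subset_union_left)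
      exact (hmemT _).mp (e i).2
    have key := H T.card A' hA'meas hA'disj hA'cov hA'pos
    have hterm_eq : ∀ i, term (A' i) = term (A (e i)) := by
      intro i
      rw [hA'eq']
      by_cases h : ((e i : Fin m) = k0)
      · simp only [if_pos h]
        have h1 : ν (A (e i) ∪ N) = ν (A (e i)) := measure_congr (union_ae_eq_left_of_ae_eq_empty (ae_eq_empty.mpr hNnull))
        have h2 : ∫ x in A (e i) ∪ N, f x ∂ν = ∫ x in A (e i), f x ∂ν :=
          setIntegral_congr_set (union_ae_eq_left_of_ae_eq_empty (ae_eq_empty.mpr hNnull))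
        simp [hterm, h1, h2]
      · simp [h]
    calc ∑ k ∈ T, term (A k) = ∑ t : {x // x ∈ T}, term (A t) := (Finset.sum_coe_sort T _).symm
      _ = ∑ i, term (A' i) := by
          refine (Fintype.sum_equiv e _ _ ?_).symm
          intro i
          exact hterm_eq i
      _ ≤ C := by
          convert key using 2

lemma cell_lower {S : Type*} [MeasurableSpace S] {ν : Measure S} [IsFiniteMeasure ν]
    {p : ℝ} (hp : 1 < p) {g : S → ℝ} (hg : Measurable g) (hgi : Integrable g ν)
    {a ε : ℝ} (hε : 0 < ε) :
    ∫⁻ x in g ⁻¹' (Set.Ico a (a + ε)), ENNReal.ofReal ((max (|g x| - ε) 0) ^ p) ∂ν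
      ≤ ENNReal.ofReal ((ν (g ⁻¹' (Set.Ico a (a + ε)))).toReal ^ (1 - p) *
          |∫ x in g ⁻¹' (Set.Ico a (a + ε)), g x ∂ν| ^ p) := by
  have hp0 : (0:ℝ) < p := lt_trans zero_lt_one hp
  set B : Set S := g ⁻¹' (Set.Ico a (a + ε)) with hBdef
  have hB : MeasurableSet B := hg measurableSet_Ico
  set t : ℝ := (ν B).toReal with htdef
  have ht0 : 0 ≤ t := ENNReal.toReal_nonneg
  set M : ℝ := max |a| |a + ε| with hMdef
  set c : ℝ := max (M - ε) 0 with hcdef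
  have hc0 : 0 ≤ c := le_max_right _ _
  have step1 : ∀ x ∈ B, (max (|g x| - ε) 0) ^ p ≤ c ^ p := by
    intro x hx
    have hx1 : a ≤ g x := hx.1
    have hx2 : g x < a + ε := hx.2
    have habs : |g x| ≤ M := by
      refine abs_le.mpr ⟨?_, ?_⟩
      · have h1 : -a ≤ |a| := neg_le_abs a
        have h2 : |a| ≤ M := le_max_left _ _
        linarith
      · have h1 : a + ε ≤ |a + ε| := le_abs_self _
        have h2 : |a + ε| ≤ M := le_max_right _ _
        linarith
    refine Real.rpow_le_rpow (le_max_right _ _) ?_ hp0.le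
    exact max_le_max (by linarith) le_rfl
  have step2 : ∫⁻ x in B, ENNReal.ofReal ((max (|g x| - ε) 0) ^ p) ∂ν
      ≤ ENNReal.ofReal (c ^ p * t) := by
    calc ∫⁻ x in B, ENNReal.ofReal ((max (|g x| - ε) 0) ^ p) ∂ν
        ≤ ∫⁻ _ in B, ENNReal.ofReal (c ^ p) ∂ν :=
          setLIntegral_mono' hB fun x hx => ENNReal.ofReal_le_ofReal (step1 x hx)
      _ = ENNReal.ofReal (c ^ p) * ν B := setLIntegral_const _ _
      _ = ENNReal.ofReal (c ^ p) * ENNReal.ofReal t := by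
          rw [htdef, ENNReal.ofReal_toReal (measure_ne_top ν B)]
      _ = ENNReal.ofReal (c ^ p * t) :=
          (ENNReal.ofReal_mul (Real.rpow_nonneg hc0 _)).symm
  refine le_trans step2 (ENNReal.ofReal_le_ofReal ?_)
  -- real inequality : c ^ p * t ≤ t ^ (1 - p) * |∫ x in B, g x ∂ν| ^ p
  rcases eq_or_lt_of_le ht0 with h0 | htpos
  · rw [← h0, mul_zero]
    exact mul_nonneg (Real.rpow_nonneg le_rfl _) (Real.rpow_nonneg (abs_nonneg _) _)
  · have hlow : a * t ≤ ∫ x in B, g x ∂ν := by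
      have h := setIntegral_mono_on (f := fun _ => a) (g := g) (μ := ν)
        (integrableOn_const (measure_ne_top ν B)) hgi.integrableOn hB
        (fun x hx => hx.1)
      simpa [setIntegral_const, smul_eq_mul, mul_comm, measureReal_def, htdef] using h
    have hhigh : ∫ x in B, g x ∂ν ≤ (a + ε) * t := by
      have h := setIntegral_mono_on (f := g) (g := fun _ => a + ε) (μ := ν)
        hgi.integrableOn (integrableOn_const (measure_ne_top ν B)) hB
        (fun x hx => le_of_lt hx.2)
      simpa [setIntegral_const, smul_eq_mul, mul_comm, measureReal_def, htdef] using h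
    have key : c * t ≤ |∫ x in B, g x ∂ν| := by
      by_cases hMε : M - ε ≤ 0
      · have : c = 0 := max_eq_right hMε
        rw [this, zero_mul]
        exact abs_nonneg _
      · push_neg at hMε
        have hcM : c = M - ε := max_eq_left hMε.le
        by_cases hs : |a| ≤ a + ε
        · have ha0 : 0 ≤ a + ε := le_trans (abs_nonneg a) hs
          have hM : M = a + ε := by
            rw [hMdef, abs_of_nonneg ha0]
            exact max_eq_right hs
          have hca : c = a := by rw [hcM, hM]; ring
          rw [hca]
          exact le_trans hlow (le_abs_self _)
        · push_neg at hs
          have ha_neg : a < 0 := by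
            by_contra hcon
            push_neg at hcon
            rw [abs_of_nonneg hcon] at hs
            linarith
          have habsa : |a| = -a := abs_of_neg ha_neg
          have habsae : |a + ε| ≤ -a := by
            refine abs_le.mpr ⟨by linarith, ?_⟩
            rw [habsa] at hs; linarith
          have hM : M = -a := by
            rw [hMdef, habsa]
            exact max_eq_left habsae
          have hca : c = -(a + ε) := by rw [hcM, hM]; ring
          rw [hca]
          calc -(a + ε) * t = -((a + ε) * t) := by ring
            _ ≤ -∫ x in B, g x ∂ν := neg_le_neg hhigh
            _ ≤ |∫ x in B, g x ∂ν| := neg_le_abs _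
    calc c ^ p * t
        = c ^ p * (t ^ (1 - p) * t ^ p) := by
          rw [← Real.rpow_add htpos]
          norm_num
      _ = t ^ (1 - p) * (c ^ p * t ^ p) := by ring
      _ = t ^ (1 - p) * (c * t) ^ p := by rw [Real.mul_rpow hc0 ht0]
      _ ≤ t ^ (1 - p) * |∫ x in B, g x ∂ν| ^ p := by
          refine mul_le_mul_of_nonneg_left ?_ (Real.rpow_nonneg ht0 _)
          exact Real.rpow_le_rpow (mul_nonneg hc0 ht0) key hp0.le

lemma partition_bound_n {S : Type*} [MeasurableSpace S] {ν : Measure S} [IsFiniteMeasure ν]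
    {p : ℝ} (hp : 1 < p) {g : S → ℝ} (hg : Measurable g) (hgi : Integrable g ν)
    {C : ℝ}
    (H : ∀ (m : ℕ) (A : Fin m → Set S), (∀ k, MeasurableSet (A k)) →
      Pairwise (Function.onFun Disjoint A) → (⋃ k, A k) = Set.univ →
      ∑ k, (ν (A k)).toReal ^ (1 - p) * |∫ x in A k, g x ∂ν| ^ p ≤ C)
    (n : ℕ) :
    ∫⁻ x, ENNReal.ofReal
        (if |g x| < (n:ℝ)+1 then (max (|g x| - ((n:ℝ)+1)⁻¹) 0) ^ p else 0) ∂ν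
      ≤ ENNReal.ofReal C := by
  have hp0 : (0:ℝ) < p := lt_trans zero_lt_one hp
  set ε : ℝ := ((n:ℝ)+1)⁻¹ with hεdef
  have hε : 0 < ε := by positivity
  set K : ℕ := 2*(n+1)*(n+1) with hKdef
  set a : ℕ → ℝ := fun j => -((n:ℝ)+1) + j * ε with hadef
  have hKε : (K:ℝ) * ε = 2*((n:ℝ)+1) := by
    rw [hKdef, hεdef]
    push_cast
    field_simp
  set B : Fin (K+1) → Set S := fun j =>
    if (j:ℕ) < K then g ⁻¹' (Set.Ico (a j) (a j + ε))
    else (g ⁻¹' (Set.Ico (-((n:ℝ)+1)) ((n:ℝ)+1)))ᶜ with hBdef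
  have hsub : ∀ j : ℕ, j < K →
      Set.Ico (a (j:ℕ)) (a (j:ℕ) + ε) ⊆ Set.Ico (-((n:ℝ)+1)) ((n:ℝ)+1) := by
    intro j hj
    apply Set.Ico_subset_Ico
    · have : (0:ℝ) ≤ (j:ℝ) * ε := by positivity
      simp only [hadef]; linarith
    · have hjK : ((j:ℝ)+1) ≤ (K:ℝ) := by exact_mod_cast Nat.succ_le_of_lt hj
      have : ((j:ℝ)+1) * ε ≤ (K:ℝ) * ε := by nlinarith
      simp only [hadef]
      nlinarith
  have hmeasB : ∀ j, MeasurableSet (B j) := by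
    intro j
    by_cases h : (j:ℕ) < K
    · simp only [hBdef, if_pos h]
      exact hg measurableSet_Ico
    · simp only [hBdef, if_neg h]
      exact (hg measurableSet_Ico).compl
  have hdisjB : Pairwise (Function.onFun Disjoint B) := by
    intro i j hij
    show Disjoint (B i) (B j)
    have hIco : ∀ j1 j2 : ℕ, j1 ≠ j2 →
        Disjoint (Set.Ico (a j1) (a j1 + ε)) (Set.Ico (a j2) (a j2 + ε)) := by
      intro j1 j2 h12
      rw [Set.Ico_disjoint_Ico]
      rcases lt_or_gt_of_ne h12 with h | h
      · refine le_trans (min_le_left _ _) (le_trans ?_ (le_max_right _ _))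
        have : ((j1:ℝ)+1) ≤ (j2:ℝ) := by exact_mod_cast Nat.succ_le_of_lt h
        simp only [hadef]
        nlinarith
      · refine le_trans (min_le_right _ _) (le_trans ?_ (le_max_left _ _))
        have : ((j2:ℝ)+1) ≤ (j1:ℝ) := by exact_mod_cast Nat.succ_le_of_lt h
        simp only [hadef]
        nlinarith
    rw [hBdef]
    by_cases hi : (i:ℕ) < K <;> by_cases hj : (j:ℕ) < K
    · simp only [if_pos hi, if_pos hj]
      exact Disjoint.preimage g (hIco i j (fun h => hij (Fin.ext h)))
    · simp only [if_pos hi, if_neg hj]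
      refine Disjoint.mono_left (Set.preimage_mono (hsub i hi)) disjoint_compl_right
    · simp only [if_neg hi, if_pos hj]
      exact (Disjoint.mono_left (Set.preimage_mono (hsub j hj)) disjoint_compl_right).symm
    · exact absurd (Fin.ext (by omega : (i:ℕ) = (j:ℕ))) hij
  have hcovB : (⋃ j, B j) = Set.univ := by
    apply Set.eq_univ_of_forall
    intro x
    by_cases hx : g x ∈ Set.Ico (-((n:ℝ)+1)) ((n:ℝ)+1)
    · set r : ℝ := (g x + ((n:ℝ)+1)) / ε with hrdef
      have hr0 : 0 ≤ r := by
        rw [hrdef]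
        apply div_nonneg _ hε.le
        have := hx.1
        linarith
      have hrK : r < (K:ℝ) := by
        rw [hrdef, div_lt_iff₀ hε]
        have := hx.2
        nlinarith
      set j : ℕ := ⌊r⌋₊ with hjdef
      have hjK : j < K := by
        have : (j:ℝ) ≤ r := Nat.floor_le hr0
        exact_mod_cast (Nat.floor_lt hr0).mpr hrK
      refine Set.mem_iUnion.mpr ⟨⟨j, Nat.lt_succ_of_lt hjK⟩, ?_⟩
      rw [hBdef]
      simp only [if_pos hjK]
      constructor
      · have h1 : (j:ℝ) ≤ r := Nat.floor_le hr0
        have h2 : (j:ℝ) * ε ≤ r * ε := by nlinarith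
        have h3 : r * ε = g x + ((n:ℝ)+1) := by
          rw [hrdef]; field_simp
        simp only [hadef]
        nlinarith
      · have h1 : r < (j:ℝ) + 1 := Nat.lt_floor_add_one r
        have h2 : r * ε < ((j:ℝ) + 1) * ε := by nlinarith
        have h3 : r * ε = g x + ((n:ℝ)+1) := by
          rw [hrdef]; field_simp
        simp only [hadef]
        nlinarith
    · refine Set.mem_iUnion.mpr ⟨⟨K, Nat.lt_succ_self K⟩, ?_⟩
      rw [hBdef]
      simp only [lt_irrefl, if_neg (lt_irrefl K)]
      exact hx
  have hcell : ∀ j : Fin (K+1), ∫⁻ x in B j, ENNReal.ofReal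
        (if |g x| < (n:ℝ)+1 then (max (|g x| - ε) 0) ^ p else 0) ∂ν
      ≤ ENNReal.ofReal ((ν (B j)).toReal ^ (1 - p) * |∫ x in B j, g x ∂ν| ^ p) := by
    intro j
    by_cases hj : (j:ℕ) < K
    · have hBj : B j = g ⁻¹' (Set.Ico (a j) (a j + ε)) := by
        rw [hBdef]; simp only [if_pos hj]
      rw [hBj]
      refine le_trans (lintegral_mono fun x => ENNReal.ofReal_le_ofReal ?_)
        (cell_lower hp hg hgi hε (a := a j))
      split
      · exact le_rfl
      · exact Real.rpow_nonneg (le_max_right _ _) _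
    · have hBj : B j = (g ⁻¹' (Set.Ico (-((n:ℝ)+1)) ((n:ℝ)+1)))ᶜ := by
        rw [hBdef]; simp only [if_neg hj]
      have hzero : ∀ x ∈ B j, ENNReal.ofReal
          (if |g x| < (n:ℝ)+1 then (max (|g x| - ε) 0) ^ p else 0) = 0 := by
        intro x hx
        rw [hBj] at hx
        have : ¬ (|g x| < (n:ℝ)+1) := by
          intro habs
          rw [abs_lt] at habs
          exact hx ⟨by linarith, habs.2⟩
        rw [if_neg this, ENNReal.ofReal_zero]
      have : ∫⁻ x in B j, ENNReal.ofReal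
          (if |g x| < (n:ℝ)+1 then (max (|g x| - ε) 0) ^ p else 0) ∂ν = 0 := by
        rw [setLIntegral_congr_fun (hmeasB j) hzero]
        simp
      rw [this]
      exact zero_le
  have hsplit : ∫⁻ x, ENNReal.ofReal
      (if |g x| < (n:ℝ)+1 then (max (|g x| - ε) 0) ^ p else 0) ∂ν
      = ∑ j, ∫⁻ x in B j, ENNReal.ofReal
          (if |g x| < (n:ℝ)+1 then (max (|g x| - ε) 0) ^ p else 0) ∂ν := by
    conv_lhs => rw [← setLIntegral_univ, ← hcovB]
    rw [lintegral_iUnion hmeasB hdisjB, tsum_fintype]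
  rw [hsplit]
  calc ∑ j, ∫⁻ x in B j, ENNReal.ofReal
        (if |g x| < (n:ℝ)+1 then (max (|g x| - ε) 0) ^ p else 0) ∂ν
      ≤ ∑ j, ENNReal.ofReal ((ν (B j)).toReal ^ (1 - p) * |∫ x in B j, g x ∂ν| ^ p) :=
        Finset.sum_le_sum fun j _ => hcell j
    _ = ENNReal.ofReal (∑ j, (ν (B j)).toReal ^ (1 - p) * |∫ x in B j, g x ∂ν| ^ p) :=
        (ENNReal.ofReal_sum_of_nonneg fun j _ =>
          mul_nonneg (Real.rpow_nonneg ENNReal.toReal_nonneg _)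
            (Real.rpow_nonneg (abs_nonneg _) _)).symm
    _ ≤ ENNReal.ofReal C :=
        ENNReal.ofReal_le_ofReal (H (K+1) B hmeasB hdisjB hcovB)

lemma core_lintegral_le {S : Type*} [MeasurableSpace S] {ν : Measure S} [IsFiniteMeasure ν]
    {p : ℝ} (hp : 1 < p) {g : S → ℝ} (hg : Measurable g) (hgi : Integrable g ν)
    {C : ℝ}
    (H : ∀ (m : ℕ) (A : Fin m → Set S), (∀ k, MeasurableSet (A k)) →
      Pairwise (Function.onFun Disjoint A) → (⋃ k, A k) = Set.univ →
      ∑ k, (ν (A k)).toReal ^ (1 - p) * |∫ x in A k, g x ∂ν| ^ p ≤ C) :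
    ∫⁻ x, ENNReal.ofReal (|g x| ^ p) ∂ν ≤ ENNReal.ofReal C := by
  have hp0 : (0:ℝ) < p := lt_trans zero_lt_one hp
  set G : ℕ → S → ℝ≥0∞ := fun n x => ENNReal.ofReal
    (if |g x| < (n:ℝ)+1 then (max (|g x| - ((n:ℝ)+1)⁻¹) 0) ^ p else 0) with hGdef
  have hGmeas : ∀ n, Measurable (G n) := by
    intro n
    apply ENNReal.measurable_ofReal.comp
    refine Measurable.ite (measurableSet_lt hg.abs measurable_const) ?_ measurable_const
    exact (Real.continuous_rpow_const hp0.le).measurable.comp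
      ((hg.abs.sub measurable_const).max measurable_const)
  have hGmono : Monotone G := by
    apply monotone_nat_of_le_succ
    intro n x
    apply ENNReal.ofReal_le_ofReal
    by_cases h : |g x| < (n:ℝ)+1
    · have h' : |g x| < ((n+1:ℕ):ℝ)+1 := by push_cast; linarith
      rw [if_pos h, if_pos h']
      refine Real.rpow_le_rpow (le_max_right _ _) ?_ hp0.le
      refine max_le_max (sub_le_sub_left ?_ _) le_rfl
      have h1 : (0:ℝ) < (n:ℝ)+1 := by positivity
      refine inv_anti₀ h1 ?_
      push_cast
      linarith
    · rw [if_neg h]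
      split
      · exact Real.rpow_nonneg (le_max_right _ _) _
      · exact le_rfl
  have hGsup : ∀ x, (⨆ n, G n x) = ENNReal.ofReal (|g x| ^ p) := by
    intro x
    have hmx : Monotone fun n => G n x := fun i j h => hGmono h x
    refine tendsto_nhds_unique (tendsto_atTop_iSup hmx) ?_
    have h1 : Tendsto (fun n : ℕ => ((n:ℝ)+1)⁻¹) atTop (𝓝 0) := by
      simpa [one_div] using tendsto_one_div_add_atTop_nhds_zero_nat (𝕜 := ℝ)
    have h2 : Tendsto (fun n : ℕ => max (|g x| - ((n:ℝ)+1)⁻¹) 0) atTop (𝓝 (|g x|)) := by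
      have := (tendsto_const_nhds (x := |g x|) (f := atTop (α := ℕ))).sub h1
      have h3 := this.max (tendsto_const_nhds (x := (0:ℝ)))
      simpa [max_eq_left (abs_nonneg (g x))] using h3
    have h3 : Tendsto (fun n : ℕ => (max (|g x| - ((n:ℝ)+1)⁻¹) 0) ^ p) atTop
        (𝓝 (|g x| ^ p)) := h2.rpow_const (Or.inr hp0.le)
    have h4 : (fun n : ℕ => (max (|g x| - ((n:ℝ)+1)⁻¹) 0) ^ p) =ᶠ[atTop]
        (fun n : ℕ => if |g x| < (n:ℝ)+1 then (max (|g x| - ((n:ℝ)+1)⁻¹) 0) ^ p else 0) := by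
      filter_upwards [eventually_ge_atTop ⌈|g x|⌉₊] with n hn
      have hlt : |g x| < (n:ℝ)+1 := by
        have h5 : |g x| ≤ ((⌈|g x|⌉₊ : ℕ):ℝ) := Nat.le_ceil _
        have h6 : ((⌈|g x|⌉₊ : ℕ):ℝ) ≤ (n:ℝ) := by exact_mod_cast hn
        linarith
      rw [if_pos hlt]
    exact (ENNReal.continuous_ofReal.tendsto _).comp (h3.congr' h4)
  calc ∫⁻ x, ENNReal.ofReal (|g x| ^ p) ∂ν
      = ∫⁻ x, ⨆ n, G n x ∂ν := lintegral_congr fun x => (hGsup x).symm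
    _ = ⨆ n, ∫⁻ x, G n x ∂ν := lintegral_iSup hGmeas hGmono
    _ ≤ ENNReal.ofReal C := iSup_le fun n => partition_bound_n hp hg hgi H n

lemma lintegral_le_of_partitions {S : Type*} [MeasurableSpace S] {ν : Measure S}
    [IsFiniteMeasure ν] {p : ℝ} (hp : 1 < p) {f : S → ℝ} (hf : Integrable f ν)
    {C : ℝ} (hC0 : 0 ≤ C)
    (H : ∀ (m : ℕ) (A : Fin m → Set S), (∀ k, MeasurableSet (A k)) →
      Pairwise (Function.onFun Disjoint A) → (⋃ k, A k) = Set.univ →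
      (∀ k, 0 < ν (A k)) →
      ∑ k, (ν (A k)).toReal ^ (1 - p) * |∫ x in A k, f x ∂ν| ^ p ≤ C) :
    ∫⁻ x, ENNReal.ofReal (|f x| ^ p) ∂ν ≤ ENNReal.ofReal C := by
  set g : S → ℝ := hf.1.mk f with hgdef
  have hae : f =ᵐ[ν] g := hf.1.ae_eq_mk
  have hg : Measurable g := hf.1.stronglyMeasurable_mk.measurable
  have hgi : Integrable g ν := hf.congr hae
  have hlin : ∫⁻ x, ENNReal.ofReal (|f x| ^ p) ∂ν = ∫⁻ x, ENNReal.ofReal (|g x| ^ p) ∂ν :=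
    lintegral_congr_ae (hae.mono fun x hx => by simp only [hx])
  rw [hlin]
  refine core_lintegral_le hp hg hgi ?_
  intro m A hmeas hdisj hcov
  have hint_eq : ∀ k, ∫ x in A k, g x ∂ν = ∫ x in A k, f x ∂ν := by
    intro k
    exact integral_congr_ae (ae_restrict_of_ae hae.symm)
  simp_rw [hint_eq]
  exact drop_pos hp f hC0 H m A hmeas hdisj hcov

/-- For a finite positive measure `ν` and `1 < p < ∞`, an integrable `f` is in
`L^p(ν)` iff there is `C > 0` bounding `∑_k ν(A_k)^{1-p} |∫_{A_k} f dν|^p` over all finite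
measurable partitions with cells of positive measure; and the least such constant is
`‖f‖_p^p`. -/
theorem memLp_iff_partition_sums_bounded {S : Type*} [MeasurableSpace S]
    (ν : Measure S) [IsFiniteMeasure ν] (p : ℝ) (hp : 1 < p)
    (f : S → ℝ) (hf : Integrable f ν) :
    (MemLp f (ENNReal.ofReal p) ν ↔
      ∃ C > (0 : ℝ), ∀ (m : ℕ) (A : Fin m → Set S), (∀ k, MeasurableSet (A k)) →
        Pairwise (Function.onFun Disjoint A) → (⋃ k, A k) = Set.univ →
        (∀ k, 0 < ν (A k)) →
        ∑ k, (ν (A k)).toReal ^ (1 - p) * |∫ x in A k, f x ∂ν| ^ p ≤ C) ∧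
    (MemLp f (ENNReal.ofReal p) ν →
      IsLeast {C : ℝ | 0 ≤ C ∧ ∀ (m : ℕ) (A : Fin m → Set S), (∀ k, MeasurableSet (A k)) →
          Pairwise (Function.onFun Disjoint A) → (⋃ k, A k) = Set.univ →
          (∀ k, 0 < ν (A k)) →
          ∑ k, (ν (A k)).toReal ^ (1 - p) * |∫ x in A k, f x ∂ν| ^ p ≤ C}
        ((eLpNorm f (ENNReal.ofReal p) ν).toReal ^ p)) := by
  have hp0 : (0:ℝ) < p := lt_trans zero_lt_one hp
  have hP0 : (ENNReal.ofReal p) ≠ 0 := by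
    simp [ENNReal.ofReal_eq_zero, not_le, hp0]
  have hPt : (ENNReal.ofReal p) ≠ ⊤ := ENNReal.ofReal_ne_top
  have hPr : (ENNReal.ofReal p).toReal = p := ENNReal.toReal_ofReal hp0.le
  have hbridge : ∫⁻ x, ‖f x‖ₑ ^ p ∂ν = ∫⁻ x, ENNReal.ofReal (|f x| ^ p) ∂ν := by
    refine lintegral_congr fun x => ?_
    rw [← ofReal_norm, ENNReal.ofReal_rpow_of_nonneg (norm_nonneg _) hp0.le,
      Real.norm_eq_abs]
  constructor
  · constructor
    · intro hmem
      refine ⟨(eLpNorm f (ENNReal.ofReal p) ν).toReal ^ p + 1, ?_, ?_⟩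
      · have := Real.rpow_nonneg (ENNReal.toReal_nonneg
          (a := eLpNorm f (ENNReal.ofReal p) ν)) p
        linarith
      · intro m A h1 h2 h3 _
        have := sum_le_integral hp hmem m A h1 h2 h3
        linarith
    · rintro ⟨C, hC, H⟩
      refine ⟨hf.1, ?_⟩
      rw [eLpNorm_eq_lintegral_rpow_enorm_toReal hP0 hPt, hPr]
      have hle : ∫⁻ x, ‖f x‖ₑ ^ p ∂ν ≤ ENNReal.ofReal C := by
        rw [hbridge]
        exact lintegral_le_of_partitions hp hf hC.le H
      have hne : ∫⁻ x, ‖f x‖ₑ ^ p ∂ν ≠ ⊤ :=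
        (lt_of_le_of_lt hle ENNReal.ofReal_lt_top).ne
      rw [one_div]
      exact ENNReal.rpow_lt_top_of_nonneg (by positivity) hne
  · intro hmem
    constructor
    · refine ⟨Real.rpow_nonneg ENNReal.toReal_nonneg p, ?_⟩
      intro m A h1 h2 h3 _
      exact sum_le_integral hp hmem m A h1 h2 h3
    · rintro C ⟨hC0, HC⟩
      have h1 : (eLpNorm f (ENNReal.ofReal p) ν).toReal ^ p
          = (∫⁻ x, ENNReal.ofReal (|f x| ^ p) ∂ν).toReal := by
        rw [toReal_eLpNorm_pow hp hmem]
        refine integral_eq_lintegral_of_nonneg_ae ?_ ?_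
        · exact ae_of_all _ fun x => Real.rpow_nonneg (abs_nonneg _) _
        · exact ((Real.continuous_rpow_const hp0.le).measurable.comp_aemeasurable
            hf.1.aemeasurable.norm).aestronglyMeasurable
      rw [h1]
      calc (∫⁻ x, ENNReal.ofReal (|f x| ^ p) ∂ν).toReal
          ≤ (ENNReal.ofReal C).toReal :=
            ENNReal.toReal_mono ENNReal.ofReal_ne_top
              (lintegral_le_of_partitions hp hf hC0 HC)
        _ = C := ENNReal.toReal_ofReal hC0
end

section
/- Let v be a time-dependent vector field on ℝ^d satisfying (V1)–(V3), with flow Φ^v and push-forward operators P^v_{t₀,t} μ := (Φ^v_{t₀,t})_# μ. Then for any finite signed Borel measure μ, any t₀ ≥ 0 and any bounded interval I ⊂ [t₀, ∞), the map t ↦ P^v_{t₀,t} μ is Lipschitz for the Fortet–Mourier norm: ‖P^v_{t₀,t}μ − P^v_{t₀,s}μ‖_FM* ≤ C'_I ‖μ‖_TV |t − s| for all s, t ∈ I, where C'_I = sup_{t∈I} ‖v_t‖_∞ · exp(∫_{t₀}^{sup I} |v_τ|_L dτ). -/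
open MeasureTheory Filter Topology

lemma jordan_apply {S : Type*} [MeasurableSpace S] (μ : SignedMeasure S) {E : Set S}
    (hE : MeasurableSet E) :
    μ E = (μ.toJordanDecomposition.posPart E).toReal -
      (μ.toJordanDecomposition.negPart E).toReal := by
  conv_lhs => rw [← μ.toSignedMeasure_toJordanDecomposition]
  rw [JordanDecomposition.toSignedMeasure, VectorMeasure.sub_apply,
    Measure.toSignedMeasure_apply_measurable hE, Measure.toSignedMeasure_apply_measurable hE]
  rfl

lemma sintegral_repr {S : Type*} [MeasurableSpace S] (ν : SignedMeasure S)
    (α β : Measure S) [IsFiniteMeasure α] [IsFiniteMeasure β]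
    (h : ∀ E : Set S, MeasurableSet E → ν E = (α E).toReal - (β E).toReal)
    (f : S → ℝ) (hm : Measurable f) (hb : ∀ x, |f x| ≤ 1) :
    sintegral ν f = (∫ x, f x ∂α) - ∫ x, f x ∂β := by
  set p := ν.toJordanDecomposition.posPart with hp
  set n := ν.toJordanDecomposition.negPart with hn
  have key : p + β = n + α := by
    ext E hE
    have h1 := h E hE
    have h2 := jordan_apply ν hE
    simp only [Measure.add_apply]
    have e1 : (p E + β E).toReal = (n E + α E).toReal := by
      rw [ENNReal.toReal_add (measure_ne_top _ _) (measure_ne_top _ _),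
        ENNReal.toReal_add (measure_ne_top _ _) (measure_ne_top _ _)]
      linarith
    exact (ENNReal.toReal_eq_toReal_iff' (by finiteness) (by finiteness)).mp e1
  have hi : ∀ (m : Measure S) [IsFiniteMeasure m], Integrable f m := by
    intro m _
    exact (integrable_const (1 : ℝ)).mono' hm.aestronglyMeasurable
      (Filter.Eventually.of_forall fun x => by simpa [Real.norm_eq_abs] using hb x)
  have : (∫ x, f x ∂(p + β)) = ∫ x, f x ∂(n + α) := by rw [key]
  rw [integral_add_measure (hi p) (hi β), integral_add_measure (hi n) (hi α)] at this
  unfold sintegral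
  rw [← hp, ← hn]
  linarith

/-- For a vector field `v` satisfying (V1)–(V3) with flow `Φ` and
push-forward operators `P^v_{t₀,t} μ = (Φ t₀ t)_# μ`, for any finite signed Borel measure
`μ`, `t₀ ≥ 0` and bounded interval `I = [a,b] ⊂ [t₀,∞)`, the map `t ↦ P^v_{t₀,t} μ` is
Lipschitz in Fortet–Mourier norm:
`‖P^v_{t₀,t}μ − P^v_{t₀,s}μ‖_FM* ≤ (sup_I ‖v‖_∞ · exp ∫_{t₀}^{b} |v_τ|_L dτ) ‖μ‖_TV |t−s|`. -/
theorem pushforward_flow_lipschitz_in_time {d : ℕ}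
    (v : ℝ → EuclideanSpace ℝ (Fin d) → EuclideanSpace ℝ (Fin d))
    (L : ℝ → NNReal) (hLc : Continuous fun τ => (L τ : ℝ))
    (hcont : Continuous fun q : ℝ × EuclideanSpace ℝ (Fin d) => v q.1 q.2)
    (hLip : ∀ τ, LipschitzWith (L τ) (v τ))
    (Φ : ℝ → ℝ → EuclideanSpace ℝ (Fin d) → EuclideanSpace ℝ (Fin d))
    (hΦ0 : ∀ s x₀, Φ s s x₀ = x₀)
    (hΦode : ∀ s x₀ t, s ≤ t → HasDerivAt (fun u => Φ s u x₀) (v t (Φ s t x₀)) t)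
    (t₀ a b Cv : ℝ) (ht₀ : 0 ≤ t₀) (hta : t₀ ≤ a) (hab : a ≤ b)
    (hCv : ∀ t ∈ Set.Icc a b, ∀ x, ‖v t x‖ ≤ Cv)
    (μ : SignedMeasure (EuclideanSpace ℝ (Fin d))) :
    ∀ s ∈ Set.Icc a b, ∀ t ∈ Set.Icc a b,
      fmNorm (μ.map (Φ t₀ t) - μ.map (Φ t₀ s)) ≤
        (Cv * Real.exp (∫ τ in t₀..b, (L τ : ℝ))) * tvNorm μ * |t - s| := by
  intro s hs t ht
  have ht₀b : t₀ ≤ b := hta.trans hab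
  -- bound K on Lipschitz constants
  obtain ⟨u₀, -, hu₀'⟩ := isCompact_Icc.exists_isMaxOn (Set.nonempty_Icc.mpr ht₀b)
    (hLc.continuousOn : ContinuousOn (fun τ => (L τ : ℝ)) (Set.Icc t₀ b))
  set K : ℝ := (L u₀ : ℝ) with hK
  have hu₀ : ∀ u ∈ Set.Icc t₀ b, (L u : ℝ) ≤ K := fun u hu => hu₀' hu
  -- Lipschitz in space, hence measurability of the flow maps
  have hmeas : ∀ T ∈ Set.Icc t₀ b, Measurable (Φ t₀ T) := by
    intro T hT
    have hlip : ∀ x y, ‖Φ t₀ T x - Φ t₀ T y‖ ≤ Real.exp (K * (T - t₀)) * ‖x - y‖ := by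
      intro x y
      have grind := norm_le_gronwallBound_of_norm_deriv_right_le
        (f := fun u => Φ t₀ u x - Φ t₀ u y)
        (f' := fun u => v u (Φ t₀ u x) - v u (Φ t₀ u y))
        (δ := ‖x - y‖) (K := K) (ε := 0) (a := t₀) (b := T)
        (fun u hu => (((hΦode t₀ x u hu.1).sub (hΦode t₀ y u hu.1)).continuousAt).continuousWithinAt)
        (fun u hu => ((hΦode t₀ x u hu.1).sub (hΦode t₀ y u hu.1)).hasDerivWithinAt)
        (by simp [hΦ0])
        (fun u hu => by
          have h1 : ‖v u (Φ t₀ u x) - v u (Φ t₀ u y)‖ ≤ (L u : ℝ) * ‖Φ t₀ u x - Φ t₀ u y‖ := by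
            have := (hLip u).dist_le_mul (Φ t₀ u x) (Φ t₀ u y)
            simpa [dist_eq_norm] using this
          have h2 : (L u : ℝ) ≤ K := hu₀ u ⟨hu.1, hu.2.le.trans hT.2⟩
          have h3 : (L u : ℝ) * ‖Φ t₀ u x - Φ t₀ u y‖ ≤ K * ‖Φ t₀ u x - Φ t₀ u y‖ :=
            mul_le_mul_of_nonneg_right h2 (norm_nonneg _)
          simpa using h1.trans h3)
      have := grind T ⟨hT.1, le_refl T⟩
      rw [gronwallBound_ε0] at this
      simpa [mul_comm] using this
    have : LipschitzWith (Real.exp (K * (T - t₀))).toNNReal (Φ t₀ T) := by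
      apply LipschitzWith.of_dist_le_mul
      intro x y
      rw [dist_eq_norm, dist_eq_norm, Real.coe_toNNReal _ (Real.exp_pos _).le]
      exact hlip x y
    exact this.continuous.measurable
  have hsub : Set.Icc a b ⊆ Set.Icc t₀ b := Set.Icc_subset_Icc hta le_rfl
  have hmt : Measurable (Φ t₀ t) := hmeas t (hsub ht)
  have hms : Measurable (Φ t₀ s) := hmeas s (hsub hs)
  -- time Lipschitz bound
  have htime : ∀ x, ‖Φ t₀ t x - Φ t₀ s x‖ ≤ Cv * |t - s| := by
    intro x
    have := Convex.norm_image_sub_le_of_norm_hasDerivWithin_le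
      (f := fun u => Φ t₀ u x) (f' := fun u => v u (Φ t₀ u x)) (s := Set.Icc a b) (C := Cv)
      (fun u hu => (hΦode t₀ x u (hta.trans hu.1)).hasDerivWithinAt)
      (fun u hu => hCv u hu _) (convex_Icc a b) hs ht
    simpa [Real.norm_eq_abs] using this
  -- positivity facts
  have hCv0 : 0 ≤ Cv := le_trans (norm_nonneg _) (hCv a ⟨le_rfl, hab⟩ 0)
  have hexp1 : 1 ≤ Real.exp (∫ τ in t₀..b, (L τ : ℝ)) := by
    rw [← Real.exp_zero]
    apply Real.exp_le_exp.mpr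
    exact intervalIntegral.integral_nonneg ht₀b (fun u _ => (L u).coe_nonneg)
  have htv0 : 0 ≤ tvNorm μ := ENNReal.toReal_nonneg
  have hrhs : 0 ≤ (Cv * Real.exp (∫ τ in t₀..b, (L τ : ℝ))) * tvNorm μ * |t - s| := by
    positivity
  -- the supremum bound
  apply Real.sSup_le _ hrhs
  rintro r ⟨f, hfb, hfl, rfl⟩
  set κp := μ.toJordanDecomposition.posPart with hκp
  set κn := μ.toJordanDecomposition.negPart with hκn
  have hrepr : ∀ E : Set (EuclideanSpace ℝ (Fin d)), MeasurableSet E →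
      (μ.map (Φ t₀ t) - μ.map (Φ t₀ s)) E =
        (((κp.map (Φ t₀ t) + κn.map (Φ t₀ s)) : Measure _) E).toReal -
        (((κn.map (Φ t₀ t) + κp.map (Φ t₀ s)) : Measure _) E).toReal := by
    intro E hE
    rw [VectorMeasure.sub_apply, VectorMeasure.map_apply _ hmt hE,
      VectorMeasure.map_apply _ hms hE, jordan_apply μ (hmt hE), jordan_apply μ (hms hE)]
    simp only [Measure.add_apply, Measure.map_apply hmt hE, Measure.map_apply hms hE]
    rw [ENNReal.toReal_add (measure_ne_top _ _) (measure_ne_top _ _),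
      ENNReal.toReal_add (measure_ne_top _ _) (measure_ne_top _ _)]
    ring
  have hfc : Continuous f := hfl.continuous
  have hfm : Measurable f := hfc.measurable
  rw [sintegral_repr _ _ _ hrepr f hfm hfb]
  have hint : ∀ (g : EuclideanSpace ℝ (Fin d) → EuclideanSpace ℝ (Fin d)), Measurable g →
      ∀ (m : Measure (EuclideanSpace ℝ (Fin d))) [IsFiniteMeasure m],
      Integrable (fun x => f (g x)) m := by
    intro g hg m _
    exact (integrable_const (1 : ℝ)).mono' (hfm.comp hg).aestronglyMeasurable
      (Filter.Eventually.of_forall fun x => by simpa [Real.norm_eq_abs] using hfb (g x))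
  have hint' : ∀ (m : Measure (EuclideanSpace ℝ (Fin d))) [IsFiniteMeasure m],
      Integrable f m := by
    intro m _
    exact (integrable_const (1 : ℝ)).mono' hfm.aestronglyMeasurable
      (Filter.Eventually.of_forall fun x => by simpa [Real.norm_eq_abs] using hfb x)
  have e1 : (∫ x, f x ∂(κp.map (Φ t₀ t))) = ∫ x, f (Φ t₀ t x) ∂κp :=
    integral_map hmt.aemeasurable hfc.aestronglyMeasurable
  have e2 : (∫ x, f x ∂(κn.map (Φ t₀ s))) = ∫ x, f (Φ t₀ s x) ∂κn :=
    integral_map hms.aemeasurable hfc.aestronglyMeasurable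
  have e3 : (∫ x, f x ∂(κn.map (Φ t₀ t))) = ∫ x, f (Φ t₀ t x) ∂κn :=
    integral_map hmt.aemeasurable hfc.aestronglyMeasurable
  have e4 : (∫ x, f x ∂(κp.map (Φ t₀ s))) = ∫ x, f (Φ t₀ s x) ∂κp :=
    integral_map hms.aemeasurable hfc.aestronglyMeasurable
  rw [integral_add_measure (hint' _) (hint' _), integral_add_measure (hint' _) (hint' _),
    e1, e2, e3, e4]
  have heq : (∫ x, f (Φ t₀ t x) ∂κp) + (∫ x, f (Φ t₀ s x) ∂κn) -
      ((∫ x, f (Φ t₀ t x) ∂κn) + (∫ x, f (Φ t₀ s x) ∂κp)) =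
      (∫ x, (f (Φ t₀ t x) - f (Φ t₀ s x)) ∂κp) -
      ∫ x, (f (Φ t₀ t x) - f (Φ t₀ s x)) ∂κn := by
    rw [integral_sub (hint _ hmt κp) (hint _ hms κp), integral_sub (hint _ hmt κn) (hint _ hms κn)]
    ring
  rw [heq]
  have hDb : ∀ x, ‖f (Φ t₀ t x) - f (Φ t₀ s x)‖ ≤ Cv * |t - s| := by
    intro x
    have h1 : dist (f (Φ t₀ t x)) (f (Φ t₀ s x)) ≤ 1 * dist (Φ t₀ t x) (Φ t₀ s x) := by
      simpa using hfl.dist_le_mul (Φ t₀ t x) (Φ t₀ s x)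
    rw [Real.dist_eq, one_mul, dist_eq_norm] at h1
    calc ‖f (Φ t₀ t x) - f (Φ t₀ s x)‖ = |f (Φ t₀ t x) - f (Φ t₀ s x)| := Real.norm_eq_abs _
      _ ≤ ‖Φ t₀ t x - Φ t₀ s x‖ := h1
      _ ≤ Cv * |t - s| := htime x
  have hb1 : ‖∫ x, (f (Φ t₀ t x) - f (Φ t₀ s x)) ∂κp‖ ≤ (Cv * |t - s|) * (κp Set.univ).toReal :=
    norm_integral_le_of_norm_le_const (Filter.Eventually.of_forall hDb)
  have hb2 : ‖∫ x, (f (Φ t₀ t x) - f (Φ t₀ s x)) ∂κn‖ ≤ (Cv * |t - s|) * (κn Set.univ).toReal :=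
    norm_integral_le_of_norm_le_const (Filter.Eventually.of_forall hDb)
  rw [Real.norm_eq_abs] at hb1 hb2
  have htv : tvNorm μ = (κp Set.univ).toReal + (κn Set.univ).toReal := by
    unfold tvNorm
    exact ENNReal.toReal_add (measure_ne_top _ _) (measure_ne_top _ _)
  have hstep : (∫ x, (f (Φ t₀ t x) - f (Φ t₀ s x)) ∂κp) -
      (∫ x, (f (Φ t₀ t x) - f (Φ t₀ s x)) ∂κn) ≤ (Cv * |t - s|) * tvNorm μ := by
    rw [htv]
    have hp0 : (0:ℝ) ≤ (κp Set.univ).toReal := ENNReal.toReal_nonneg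
    have hn0 : (0:ℝ) ≤ (κn Set.univ).toReal := ENNReal.toReal_nonneg
    nlinarith [abs_le.mp hb1, abs_le.mp hb2]
  refine hstep.trans ?_
  have hfac : 0 ≤ Cv * tvNorm μ * |t - s| := by positivity
  nlinarith [hfac, hexp1]
end
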